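/- arXiv:1302.3906 — 2 statements merged into one kernel-verified Lean document; each statement's English description precedes it below -/
import Mathlib

section
/- Any transformation t of a finite set Q with |im t| = |Q| - 1 can be written as t = α ∘ π, where π is a permutation of Q and α is a singular transformation (a map that sends one element k to some other element ℓ and fixes all other elements). -/
/-- Any transformation `t` of a finite set `Q` with `|im t| = |Q| - 1` can be
written as `t = α ∘ π` with `π` a permutation and `α = (k → ℓ)` a singular
transformation. -/
theorem exists_singular_comp_perm {Q : Type*} [Fintype Q] [DecidableEq Q]
    (hQ : 2 ≤ Fintype.card Q) (t : Q → Q)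
    (ht : (Finset.univ.image t).card = Fintype.card Q - 1) :
    ∃ (π : Equiv.Perm Q) (k ℓ : Q), k ≠ ℓ ∧
      t = (fun q => if q = k then ℓ else q) ∘ ⇑π := by
  have hlt : (Finset.univ.image t).card < Fintype.card Q := by rw [ht]; omega
  have hninj : ¬ Function.Injective t := by
    intro h
    rw [Finset.card_image_of_injective _ h, Finset.card_univ] at hlt
    exact lt_irrefl _ hlt
  obtain ⟨a, b, hab, hne⟩ : ∃ a b, t a = t b ∧ a ≠ b := by
    simp only [Function.Injective, not_forall] at hninj
    obtain ⟨a, b, h1, h2⟩ := hninj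
    exact ⟨a, b, h1, h2⟩
  obtain ⟨m, hm⟩ : ∃ m, m ∉ Finset.univ.image t := by
    by_contra h
    push_neg at h
    have hsub : Finset.univ ⊆ Finset.univ.image t := fun x _ => h x
    have := Finset.card_le_card hsub
    rw [Finset.card_univ] at this; omega
  have himg : ((Finset.univ.erase a).image t) = Finset.univ.image t := by
    apply Finset.Subset.antisymm
    · exact Finset.image_subset_image (Finset.erase_subset _ _)
    · intro y hy
      simp only [Finset.mem_image, Finset.mem_erase, Finset.mem_univ, and_true,
        true_and] at *
      obtain ⟨x, hx⟩ := hy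
      by_cases hxa : x = a
      · exact ⟨b, hne.symm, by rw [← hab, ← hxa, hx]⟩
      · exact ⟨x, hxa, hx⟩
  have hinjOn : Set.InjOn t (Finset.univ.erase a) := by
    apply Finset.injOn_of_card_image_eq
    rw [himg, ht, Finset.card_erase_of_mem (Finset.mem_univ a), Finset.card_univ]
  set f : Q → Q := fun q => if q = a then m else t q with hf
  have hta : t a ∈ Finset.univ.image t := Finset.mem_image_of_mem t (Finset.mem_univ a)
  have hfinj : Function.Injective f := by
    intro x y hxy
    simp only [hf] at hxy
    by_cases hx : x = a <;> by_cases hy : y = a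
    · rw [hx, hy]
    · simp only [hx, hy, if_true, if_false] at hxy
      exact absurd (hxy ▸ Finset.mem_image_of_mem t (Finset.mem_univ y)) hm
    · simp only [hx, hy, if_true, if_false] at hxy
      exact absurd (hxy ▸ Finset.mem_image_of_mem t (Finset.mem_univ x)) hm
    · simp only [hx, hy, if_false] at hxy
      exact hinjOn (by simp [hx]) (by simp [hy]) hxy
  let π := Equiv.ofBijective f (Finite.injective_iff_bijective.mp hfinj)
  refine ⟨π, m, t a, ?_, ?_⟩
  · intro h; exact hm (h ▸ hta)
  · funext q
    have hπ : π q = f q := rfl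
    simp only [Function.comp_apply, hπ, hf]
    by_cases hq : q = a
    · simp [hq]
    · have hne' : t q ≠ m := fun h => hm (h ▸ Finset.mem_image_of_mem t (Finset.mem_univ q))
      simp [hq, hne']
end

section
/- Let t : Q → Q be a transformation, and let V ⊆ U ⊆ Q be such that every set in the interval [V, U] is a preimage of t. Then the union over all S ∈ [V, U] of the collections {T ⊆ Q | t⁻¹(T) = S} is exactly the interval [t(V), t(U) ∪ coim t]. -/
/-- If every set in the interval `[V, U]` is a preimage of `t`, then the union
over `S ∈ [V, U]` of the collections `{T | t⁻¹(T) = S}` is exactly the interval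
`[t(V), t(U) ∪ coim t]`. -/
theorem interval_fibers_eq_interval {Q : Type*} [Fintype Q] (t : Q → Q)
    (V U : Set Q) (hVU : V ⊆ U)
    (hpre : ∀ S : Set Q, V ⊆ S → S ⊆ U → S = t ⁻¹' (t '' S)) :
    {T : Set Q | ∃ S : Set Q, V ⊆ S ∧ S ⊆ U ∧ t ⁻¹' T = S} =
      {T : Set Q | t '' V ⊆ T ∧ T ⊆ t '' U ∪ (Set.univ \ Set.range t)} := by
  ext T
  constructor
  · rintro ⟨S, hVS, hSU, rfl⟩
    constructor
    · rintro x ⟨v, hv, rfl⟩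
      exact hVS hv
    · intro x hx
      by_cases hr : x ∈ Set.range t
      · obtain ⟨q, rfl⟩ := hr
        exact Or.inl ⟨q, hSU hx, rfl⟩
      · exact Or.inr ⟨trivial, hr⟩
  · rintro ⟨h1, h2⟩
    refine ⟨t ⁻¹' T, ?_, ?_, rfl⟩
    · intro v hv
      exact h1 ⟨v, hv, rfl⟩
    · -- show t⁻¹T ⊆ U using the auxiliary set S₀ = V ∪ (U ∩ t⁻¹T)
      intro q hq
      set S₀ : Set Q := V ∪ (U ∩ t ⁻¹' T) with hS₀
      have hVS₀ : V ⊆ S₀ := Set.subset_union_left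
      have hS₀U : S₀ ⊆ U := by
        rintro x (hx | ⟨hx, _⟩)
        · exact hVU hx
        · exact hx
      have key := hpre S₀ hVS₀ hS₀U
      have htq : t q ∈ T := hq
      rcases h2 htq with hu | ⟨_, hnr⟩
      · obtain ⟨u, hu, hut⟩ := hu
        have hu' : u ∈ S₀ := Or.inr ⟨hu, by simp [Set.mem_preimage, hut, htq]⟩
        have : q ∈ t ⁻¹' (t '' S₀) := ⟨u, hu', hut⟩
        rw [← key] at this
        exact hS₀U this
      · exact absurd ⟨q, rfl⟩ hnr
end
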